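/- Let e₀ be the first standard basis vector of ℂ^d, ℱ the finite Fourier operator, and f₀ = ℱe₀ = d^{-1/2}Σ_n e_n. Then the maximum of min{⟨e₀, A e₀⟩, ⟨f₀, A f₀⟩} over all positive semidefinite trace-1 operators A on ℂ^d equals (1/2)(1 + 1/√d), attained at A = |v⟩⟨v| with v = √(√d/(2(√d+1)))·(e₀ + f₀). -/

import Mathlib

open scoped ComplexOrder

open Matrix in
lemma re_dot_star {d : ℕ} (y : Fin d → ℂ) : (star y ⬝ᵥ y).re = ∑ i, ‖y i‖^2 := by
  simp only [dotProduct, Pi.star_apply, Complex.re_sum]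
  congr 1; ext i
  rw [Complex.star_def, mul_comm, Complex.mul_conj, Complex.ofReal_re,
    Complex.normSq_eq_norm_sq]

open Matrix in
lemma quad_eq {d : ℕ} (B : Matrix (Fin d) (Fin d) ℂ) (x : Fin d → ℂ) :
    (star x ⬝ᵥ (Bᴴ*B) *ᵥ x).re = ∑ i, ‖(B *ᵥ x) i‖^2 := by
  rw [← mulVec_mulVec, dotProduct_mulVec, vecMul_conjTranspose, star_star, re_dot_star]

lemma row_ineq (d : ℕ) [NeZero d] (r : Fin d → ℂ) :
    ‖r 0‖^2 + ((Real.sqrt d)⁻¹)^2 * ‖∑ j, r j‖^2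
      ≤ (1 + (Real.sqrt d)⁻¹) * ∑ j, ‖r j‖^2 := by
  have hd : (1 : ℕ) ≤ d := Nat.one_le_iff_ne_zero.mpr (NeZero.ne d)
  set s : ℝ := (Real.sqrt d)⁻¹ with hs
  have ht : (1:ℝ) ≤ Real.sqrt d := by
    rw [show (1:ℝ) = Real.sqrt 1 by simp]
    exact Real.sqrt_le_sqrt (by exact_mod_cast hd)
  have hs0 : 0 < s := inv_pos.mpr (lt_of_lt_of_le one_pos ht)
  have hs1 : s ≤ 1 := by
    rw [hs]; exact inv_le_one_of_one_le₀ ht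
  have hds : (d:ℝ) * s^2 = 1 := by
    rw [hs, inv_pow, Real.sq_sqrt (by positivity)]
    field_simp
  set P : ℝ := ‖r 0‖ with hP
  set Q : ℝ := ‖∑ j ∈ Finset.univ.erase 0, r j‖ with hQ
  set T : ℝ := ∑ j ∈ Finset.univ.erase 0, ‖r j‖^2 with hT
  have hsum : ∑ j, r j = r 0 + ∑ j ∈ Finset.univ.erase 0, r j :=
    (Finset.add_sum_erase _ _ (Finset.mem_univ 0)).symm
  have h1 : ‖∑ j, r j‖ ≤ P + Q := by rw [hsum]; exact norm_add_le _ _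
  have h2 : Q^2 ≤ ((d:ℝ) - 1) * T := by
    have ha : Q ≤ ∑ j ∈ Finset.univ.erase 0, ‖r j‖ := norm_sum_le _ _
    have hb : (∑ j ∈ Finset.univ.erase 0, ‖r j‖)^2
        ≤ (Finset.univ.erase (0 : Fin d)).card * T := sq_sum_le_card_mul_sum_sq
    have hcard : ((Finset.univ.erase (0 : Fin d)).card : ℝ) = (d:ℝ) - 1 := by
      rw [Finset.card_erase_of_mem (Finset.mem_univ 0)]
      simp [Nat.cast_sub hd]
    calc Q^2 ≤ (∑ j ∈ Finset.univ.erase 0, ‖r j‖)^2 := by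
              apply pow_le_pow_left₀ (norm_nonneg _) ha
      _ ≤ ((d:ℝ) - 1) * T := by rw [← hcard]; exact hb
  have hTsum : ∑ j, ‖r j‖^2 = P^2 + T := by
    rw [hP, hT]; exact (Finset.add_sum_erase _ _ (Finset.mem_univ 0)).symm
  have hQ0 : 0 ≤ Q := norm_nonneg _
  have hP0 : 0 ≤ P := norm_nonneg _
  have hT0 : 0 ≤ T := Finset.sum_nonneg fun _ _ => sq_nonneg _
  have h3 : s^2 * ‖∑ j, r j‖^2 ≤ s^2 * (P+Q)^2 :=
    mul_le_mul_of_nonneg_left (pow_le_pow_left₀ (norm_nonneg _) h1 2) (sq_nonneg s)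
  have h2s : s^2 * Q^2 ≤ (1 - s^2) * T := by
    have := mul_le_mul_of_nonneg_left h2 (sq_nonneg s)
    nlinarith [mul_nonneg hT0 (sq_nonneg s)]
  rw [hTsum]
  have cert : (1-s) * ((1+s)*(P^2+T) - (P^2 + s^2*(P+Q)^2))
      = s*((1-s)*P - s*Q)^2 + ((1-s^2)*T - s^2*Q^2) := by ring
  rcases eq_or_lt_of_le hs1 with he | hlt
  · rw [he] at h2s h3 ⊢
    have hQz : Q = 0 := by nlinarith [hQ0, sq_nonneg Q]
    rw [hQz] at h3
    nlinarith [h3, hT0]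
  · have hpos : 0 ≤ (1+s)*(P^2+T) - (P^2 + s^2*(P+Q)^2) := by
      have h4 : 0 ≤ s*((1-s)*P - s*Q)^2 + ((1-s^2)*T - s^2*Q^2) := by
        have := mul_nonneg hs0.le (sq_nonneg ((1-s)*P - s*Q))
        linarith [h2s]
      nlinarith [cert, h4, sub_pos.mpr hlt]
    linarith [h3, hpos]

open Matrix in
lemma dot_vecMulVec {d : ℕ} (v w x y : Fin d → ℂ) :
    y ⬝ᵥ (vecMulVec v w) *ᵥ x = (y ⬝ᵥ v) * (w ⬝ᵥ x) := by
  have h : (vecMulVec v w) *ᵥ x = fun i => v i * (w ⬝ᵥ x) := by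
    ext i
    simp [mulVec, vecMulVec_apply, dotProduct, Finset.mul_sum, mul_assoc]
  rw [h]
  simp [dotProduct, Finset.sum_mul, mul_assoc]

open Matrix in
lemma psd_vecMulVec {d : ℕ} (v : Fin d → ℂ) : (vecMulVec v (star v)).PosSemidef := by
  rw [posSemidef_iff_dotProduct_mulVec]
  constructor
  · ext i j
    simp [conjTranspose_apply, vecMulVec_apply, mul_comm]
  · intro x
    rw [dot_vecMulVec]
    have h1 : star x ⬝ᵥ v = star (star v ⬝ᵥ x) := by
      simp [dotProduct, star_sum, mul_comm]
    rw [h1]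
    exact star_mul_self_nonneg _

open Matrix in
theorem stmt19 (d : ℕ) [NeZero d] :
    -- `e₀` the first standard basis vector, `f₀ = ℱe₀ = d^{-1/2}∑ₙ eₙ`
    IsGreatest
      {r : ℝ | ∃ A : Matrix (Fin d) (Fin d) ℂ, A.PosSemidef ∧ A.trace = 1 ∧
        r = min ((star (Pi.single (0 : Fin d) (1 : ℂ)) ⬝ᵥ
              A.mulVec (Pi.single (0 : Fin d) (1 : ℂ))).re)
            ((star (fun _ : Fin d => ((Real.sqrt d : ℂ))⁻¹) ⬝ᵥ
              A.mulVec (fun _ : Fin d => ((Real.sqrt d : ℂ))⁻¹)).re)}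
      ((1 + 1 / Real.sqrt d) / 2) ∧
    -- the maximum is attained at `A = |v⟩⟨v|`, `v = √(√d/(2(√d+1)))·(e₀ + f₀)`
    (letI v : Fin d → ℂ := fun i =>
        ((Real.sqrt (Real.sqrt d / (2 * (Real.sqrt d + 1))) : ℝ) : ℂ) *
          ((Pi.single (0 : Fin d) (1 : ℂ) : Fin d → ℂ) i + ((Real.sqrt d : ℂ))⁻¹)
     letI A := Matrix.vecMulVec v (star v)
     A.PosSemidef ∧ A.trace = 1 ∧
      min ((star (Pi.single (0 : Fin d) (1 : ℂ)) ⬝ᵥ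
            A.mulVec (Pi.single (0 : Fin d) (1 : ℂ))).re)
          ((star (fun _ : Fin d => ((Real.sqrt d : ℂ))⁻¹) ⬝ᵥ
            A.mulVec (fun _ : Fin d => ((Real.sqrt d : ℂ))⁻¹)).re) =
        (1 + 1 / Real.sqrt d) / 2) := by
  classical
  have hd1 : (1 : ℕ) ≤ d := Nat.one_le_iff_ne_zero.mpr (NeZero.ne d)
  have hdR : (0:ℝ) < d := by exact_mod_cast Nat.pos_of_ne_zero (NeZero.ne d)
  set t : ℝ := Real.sqrt d with ht_def
  have htpos : 0 < t := Real.sqrt_pos.mpr hdR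
  have htd : t^2 = d := Real.sq_sqrt hdR.le
  set s : ℝ := t⁻¹ with hs_def
  have hspos : 0 < s := inv_pos.mpr htpos
  have hts : t * s = 1 := mul_inv_cancel₀ htpos.ne'
  set c : ℝ := Real.sqrt (t / (2*(t+1))) with hc_def
  have hc2 : c^2 = t / (2*(t+1)) := Real.sq_sqrt (by positivity)
  -- the witness vector, real version
  set w : Fin d → ℝ := fun i => c * ((Pi.single (0 : Fin d) (1:ℝ) : Fin d → ℝ) i + s) with hw_def
  set v : Fin d → ℂ := fun i =>
      ((Real.sqrt (Real.sqrt d / (2 * (Real.sqrt d + 1))) : ℝ) : ℂ) *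
        ((Pi.single (0 : Fin d) (1 : ℂ) : Fin d → ℂ) i + ((Real.sqrt d : ℂ))⁻¹) with hv_def
  have hv : v = fun i => ((w i : ℝ) : ℂ) := by
    ext i
    rw [hv_def, hw_def]
    simp only [← ht_def, ← hc_def, hs_def]
    rcases eq_or_ne i 0 with h | h
    · subst h
      rw [Pi.single_eq_same, Pi.single_eq_same]
      push_cast
      ring
    · rw [Pi.single_eq_of_ne h, Pi.single_eq_of_ne h]
      push_cast
      ring
  have hw0 : w 0 = c * (1 + s) := by
    simp only [hw_def, Pi.single_eq_same]
  have hwi : ∀ i : Fin d, i ≠ 0 → w i = c * s := by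
    intro i hi
    simp only [hw_def, Pi.single_eq_of_ne hi, zero_add]
  have hcard : ((Finset.univ.erase (0 : Fin d)).card : ℝ) = (d:ℝ) - 1 := by
    rw [Finset.card_erase_of_mem (Finset.mem_univ 0)]
    simp [Nat.cast_sub hd1]
  have hsumw : ∑ j, w j = c * (1 + (d:ℝ) * s) := by
    rw [← Finset.add_sum_erase _ _ (Finset.mem_univ 0), hw0,
      Finset.sum_congr rfl (fun i hi => hwi i (Finset.mem_erase.mp hi).1),
      Finset.sum_const, nsmul_eq_mul, hcard]
    ring
  have hsumw2 : ∑ j, (w j)^2 = (c*(1+s))^2 + ((d:ℝ)-1) * (c*s)^2 := by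
    rw [← Finset.add_sum_erase _ _ (Finset.mem_univ 0), hw0,
      Finset.sum_congr rfl (fun i hi => by rw [hwi i (Finset.mem_erase.mp hi).1]),
      Finset.sum_const, nsmul_eq_mul, hcard]
  have htrace_val : ∑ j, (w j)^2 = 1 := by
    rw [hsumw2, ← htd]
    have expand : (c*(1+s))^2 + (t^2-1)*(c*s)^2 = c^2*((1+s)^2+(t^2-1)*s^2) := by ring
    rw [expand, hc2, hs_def]
    field_simp
    ring
  -- key value
  have hval : (c*(1+s))^2 = (1 + 1/t)/2 := by
    have expand : (c*(1+s))^2 = c^2*(1+s)^2 := by ring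
    rw [expand, hc2, hs_def]
    field_simp
  have hkey2 : s * (c * (1 + (d:ℝ)*s)) = c*(1+s) := by
    rw [← htd, hs_def]
    field_simp
    ring
  -- star of the two test vectors
  have hstar_e : star ((Pi.single (0:Fin d) (1:ℂ)) : Fin d → ℂ) = ((Pi.single (0:Fin d) (1:ℂ)) : Fin d → ℂ) := by
    ext i
    rcases eq_or_ne i 0 with h | h
    · subst h; simp
    · simp [Pi.single_eq_of_ne h]
  have hstar_f : star (fun _ : Fin d => ((Real.sqrt d : ℂ))⁻¹)
      = fun _ : Fin d => ((Real.sqrt d : ℂ))⁻¹ := by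
    ext i
    simp [← Complex.ofReal_inv]
  have hstar_v : star v = v := by
    rw [hv]; ext i; simp
  -- dot products with v
  have hdot_e_v : Pi.single (0:Fin d) (1:ℂ) ⬝ᵥ v = ((c*(1+s) : ℝ) : ℂ) := by
    rw [single_dotProduct, one_mul, hv]
    simp [hw0]
  have hdot_v_e : v ⬝ᵥ Pi.single (0:Fin d) (1:ℂ) = ((c*(1+s) : ℝ) : ℂ) := by
    rw [dotProduct_single, mul_one, hv]
    simp [hw0]
  have hdot_f_v : (fun _ : Fin d => ((Real.sqrt d : ℂ))⁻¹) ⬝ᵥ v = ((c*(1+s) : ℝ) : ℂ) := by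
    rw [hv]
    simp only [dotProduct, ← ht_def, ← Complex.ofReal_inv, ← Complex.ofReal_mul,
      ← Complex.ofReal_sum, ← hs_def]
    rw [← Finset.mul_sum, hsumw]
    exact congrArg Complex.ofReal hkey2
  have hdot_v_f : v ⬝ᵥ (fun _ : Fin d => ((Real.sqrt d : ℂ))⁻¹) = ((c*(1+s) : ℝ) : ℂ) := by
    rw [hv]
    simp only [dotProduct, ← ht_def, ← Complex.ofReal_inv, ← Complex.ofReal_mul,
      ← Complex.ofReal_sum, ← hs_def]
    rw [← Finset.sum_mul, hsumw]
    exact congrArg Complex.ofReal (by rw [mul_comm]; exact hkey2)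
  -- the attainment part
  have hA_psd : (vecMulVec v (star v)).PosSemidef := psd_vecMulVec v
  have hA_tr : (vecMulVec v (star v)).trace = 1 := by
    rw [Matrix.trace]
    simp only [diag_apply, vecMulVec_apply, hv, Pi.star_apply, RCLike.star_def,
      Complex.conj_ofReal, ← Complex.ofReal_mul, ← Complex.ofReal_sum]
    have : ∑ i, w i * w i = ∑ i, (w i)^2 := by
      congr 1; ext i; rw [pow_two]
    rw [this, htrace_val, Complex.ofReal_one]
  have hA_val : min ((star (Pi.single (0 : Fin d) (1 : ℂ)) ⬝ᵥ
            (vecMulVec v (star v)).mulVec (Pi.single (0 : Fin d) (1 : ℂ))).re)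
          ((star (fun _ : Fin d => ((Real.sqrt d : ℂ))⁻¹) ⬝ᵥ
            (vecMulVec v (star v)).mulVec (fun _ : Fin d => ((Real.sqrt d : ℂ))⁻¹)).re) =
        (1 + 1 / Real.sqrt d) / 2 := by
    rw [dot_vecMulVec, dot_vecMulVec, hstar_e, hstar_f, hstar_v,
      hdot_e_v, hdot_v_e, hdot_f_v, hdot_v_f, ← Complex.ofReal_mul, Complex.ofReal_re,
      min_self, ← pow_two, hval, ← ht_def]
  refine ⟨⟨⟨vecMulVec v (star v), hA_psd, hA_tr, hA_val.symm⟩, ?_⟩, hA_psd, hA_tr, hA_val⟩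
  -- upper bound
  rintro r ⟨A, hA, htr, rfl⟩
  obtain ⟨B, rfl⟩ : ∃ B : Matrix (Fin d) (Fin d) ℂ, A = Bᴴ * B := by
    open scoped MatrixOrder in
    exact CStarAlgebra.nonneg_iff_eq_star_mul_self.mp hA.nonneg
  have ha : (star (Pi.single (0 : Fin d) (1 : ℂ)) ⬝ᵥ
      (Bᴴ*B).mulVec (Pi.single (0 : Fin d) (1 : ℂ))).re = ∑ i, ‖B i 0‖^2 := by
    rw [quad_eq]
    simp [mulVec_single]
  have hb : (star (fun _ : Fin d => ((Real.sqrt d : ℂ))⁻¹) ⬝ᵥ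
      (Bᴴ*B).mulVec (fun _ : Fin d => ((Real.sqrt d : ℂ))⁻¹)).re
      = ∑ i, ((Real.sqrt d)⁻¹)^2 * ‖∑ j, B i j‖^2 := by
    rw [quad_eq]
    congr 1; ext i
    have h5 : (B *ᵥ fun _ : Fin d => ((Real.sqrt d : ℂ))⁻¹) i
        = (∑ j, B i j) * ((Real.sqrt d : ℂ))⁻¹ := by
      simp [mulVec, dotProduct, Finset.sum_mul]
    rw [h5, norm_mul, mul_pow, norm_inv, Complex.norm_real, Real.norm_eq_abs,
      abs_of_nonneg (Real.sqrt_nonneg _), mul_comm]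
  have htr' : ∑ i, ∑ j, ‖B i j‖^2 = 1 := by
    have h6 := congrArg Complex.re htr
    rw [Matrix.trace, Complex.one_re] at h6
    simp only [diag_apply, mul_apply, conjTranspose_apply, Complex.re_sum] at h6
    rw [← h6, Finset.sum_comm]
    congr 1; ext i; congr 1; ext j
    rw [Complex.star_def, mul_comm, Complex.mul_conj, Complex.ofReal_re,
      Complex.normSq_eq_norm_sq]
  have hsum_bound : (∑ i, ‖B i 0‖^2) + (∑ i, ((Real.sqrt d)⁻¹)^2 * ‖∑ j, B i j‖^2)
      ≤ 1 + (Real.sqrt d)⁻¹ := by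
    rw [← Finset.sum_add_distrib]
    calc ∑ i, (‖B i 0‖^2 + ((Real.sqrt d)⁻¹)^2 * ‖∑ j, B i j‖^2)
        ≤ ∑ i, (1 + (Real.sqrt d)⁻¹) * ∑ j, ‖B i j‖^2 :=
          Finset.sum_le_sum (fun i _ => row_ineq d (fun j => B i j))
      _ = (1 + (Real.sqrt d)⁻¹) * ∑ i, ∑ j, ‖B i j‖^2 := by rw [Finset.mul_sum]
      _ = 1 + (Real.sqrt d)⁻¹ := by rw [htr', mul_one]
  rw [ha, hb, one_div]
  rcases le_total (∑ i, ‖B i 0‖^2) (∑ i, ((Real.sqrt d)⁻¹)^2 * ‖∑ j, B i j‖^2) with h | h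
  · rw [min_eq_left h]; linarith
  · rw [min_eq_right h]; linarith
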